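/- The composition of simulations is a simulation: if R is a simulation of graph G in graph H and R' is a simulation of H in graph K, then the relational composition R' ∘ R is a simulation of G in K. -/

import Mathlib

/-- A graph with predicate labels in `L` and an occurrence interval (a set of
naturals) on every edge. -/
structure LabGraph (L : Type) where
  N : Type
  E : Type
  [fintypeN : Fintype N]
  [fintypeE : Fintype E]
  [deqN : DecidableEq N]
  [deqE : DecidableEq E]
  source : E → N
  target : E → N
  lab : E → L
  occur : E → Set ℕ

attribute [instance] LabGraph.fintypeN LabGraph.fintypeE LabGraph.deqN LabGraph.deqE

/-- Point-wise sum of a finite family of sets of naturals: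
⊕_{a ∈ s} F a = { Σ_{a ∈ s} g a | g a ∈ F a }.  The empty sum is {0}. -/
def setSum {α : Type} (s : Finset α) (F : α → Set ℕ) : Set ℕ :=
  {x | ∃ g : α → ℕ, (∀ a ∈ s, g a ∈ F a) ∧ x = ∑ a ∈ s, g a}

/-- R ⊆ N_G × N_H is a simulation of G in H if every pair (n,m) ∈ R has a
witness λ from the out-edges of n to the out-edges of m preserving labels,
with related targets, and such that for every out-edge f of m the point-wise
sum of the occurrence intervals of the edges mapped to f is included in the
occurrence interval of f. -/
def IsSimulation {L : Type} (G H : LabGraph L) (R : Set (G.N × H.N)) : Prop :=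
  ∀ p ∈ R, ∃ lam : {e : G.E // G.source e = p.1} → {f : H.E // H.source f = p.2},
    (∀ e, G.lab e.1 = H.lab (lam e).1) ∧
    (∀ e, (G.target e.1, H.target (lam e).1) ∈ R) ∧
    (∀ f : {f : H.E // H.source f = p.2},
      setSum (Finset.univ.filter (fun e => lam e = f)) (fun e => G.occur e.1)
        ⊆ H.occur f.1)

/-- G ≼ H : there is a simulation of G in H whose domain is all of N_G. -/
def Embeds {L : Type} (G H : LabGraph L) : Prop :=
  ∃ R : Set (G.N × H.N), IsSimulation G H R ∧ ∀ n : G.N, ∃ m, (n, m) ∈ R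

/-- A simple graph: every occurrence interval is [1;1] and there are no two
distinct edges with the same source, target and label. -/
def IsSimple {L : Type} (G : LabGraph L) : Prop :=
  (∀ e : G.E, G.occur e = Set.Icc 1 1) ∧
  (∀ e e' : G.E, G.source e = G.source e' → G.target e = G.target e' →
    G.lab e = G.lab e' → e = e')

/-- Composition of simulations is a simulation. -/
theorem simulation_comp {L : Type} (G H K : LabGraph L)
    (R : Set (G.N × H.N)) (R' : Set (H.N × K.N))
    (hR : IsSimulation G H R) (hR' : IsSimulation H K R') :
    IsSimulation G K {p | ∃ m : H.N, (p.1, m) ∈ R ∧ (m, p.2) ∈ R'} := by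

  rintro ⟨n, k⟩ ⟨m, hnm, hmk⟩
  obtain ⟨lam, hlab, htgt, hsum⟩ := hR (n, m) hnm
  obtain ⟨lam', hlab', htgt', hsum'⟩ := hR' (m, k) hmk
  refine ⟨fun e => lam' (lam e), ?_, ?_, ?_⟩
  · intro e; rw [hlab, hlab']
  · intro e; exact ⟨H.target (lam e).1, htgt e, htgt' (lam e)⟩
  · intro f x hx
    obtain ⟨g, hg, rfl⟩ := hx
    apply hsum' f
    refine ⟨fun y => ∑ e ∈ Finset.univ.filter (fun e => lam e = y), g e, ?_, ?_⟩
    · intro y hy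
      simp only [Finset.mem_filter, Finset.mem_univ, true_and] at hy
      apply hsum y
      refine ⟨g, ?_, rfl⟩
      intro e he
      simp only [Finset.mem_filter, Finset.mem_univ, true_and] at he
      exact hg e (by simp [he, hy])
    · rw [← Finset.sum_fiberwise_of_maps_to
        (g := fun e => lam e) (t := Finset.univ.filter (fun y => lam' y = f))
        (fun e he => by
          simp only [Finset.mem_filter, Finset.mem_univ, true_and] at he ⊢
          exact he) g]
      refine Finset.sum_congr rfl fun y hy => Finset.sum_congr ?_ fun _ _ => rfl
      simp only [Finset.mem_filter, Finset.mem_univ, true_and] at hy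
      ext e
      simp only [Finset.mem_filter, Finset.mem_univ, true_and]
      constructor
      · rintro ⟨-, h2⟩; exact h2
      · intro h2; exact ⟨by rw [h2, hy], h2⟩
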